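/- Let π be a uniformly random permutation of {1,...,n} and C₁,...,Cₙ prediction sets each satisfying P(c* ∈ Cᵢ) ≥ 1−α. Define, for each prefix length k, the set C^π(π₁:π_k) = {c : (1/k)·Σ_{i=1}^{k} 1{c ∈ C_{π_i}} ≥ 1/2}, and let C^π = ∩_{k=1}^{n} C^π(π₁:π_k). Then P(c* ∈ C^π) ≥ 1 − 2α. -/

import Mathlib

open MeasureTheory
open scoped Classical

open scoped ENNReal

namespace RPC

/-- number of `true`s among the first `k` coordinates -/
def cnt {n : ℕ} (s : Fin n → Bool) (k : ℕ) : ℕ :=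
  (Finset.univ.filter (fun i : Fin n => (i : ℕ) < k ∧ s i = true)).card

lemma cnt_comp {n : ℕ} (s : Fin n → Bool) (k : ℕ) (σ : Equiv.Perm (Fin n))
    (hσ : ∀ i : Fin n, (i : ℕ) < k → ((σ i : ℕ) < k)) :
    cnt (s ∘ σ) k = cnt s k := by
  classical
  unfold cnt
  apply Finset.card_bij (fun i _ => σ i)
  · intro i hi
    simp only [Finset.mem_filter, Finset.mem_univ, true_and] at hi ⊢
    exact ⟨hσ i hi.1, hi.2⟩
  · intro a ha b hb hab
    exact σ.injective hab
  · intro j hj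
    simp only [Finset.mem_filter, Finset.mem_univ, true_and] at hj
    refine ⟨σ⁻¹ j, ?_, ?_⟩
    · simp only [Finset.mem_filter, Finset.mem_univ, true_and, Function.comp_apply,
        (show σ (σ⁻¹ j) = j from σ.apply_symm_apply j)]
      constructor
      · -- (σ⁻¹ j : ℕ) < k : since σ restricted below k is a bijection on a finite set
        by_contra h
        push_neg at h
        -- σ maps {i | i < k} into itself injectively hence surjectively
        have hmaps : ∀ i ∈ Finset.univ.filter (fun i : Fin n => (i : ℕ) < k),
            σ i ∈ Finset.univ.filter (fun i : Fin n => (i : ℕ) < k) := by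
          intro i hi
          simp only [Finset.mem_filter, Finset.mem_univ, true_and] at hi ⊢
          exact hσ i hi
        have hsurj := Finset.surj_on_of_inj_on_of_card_le (fun i _ => σ i) hmaps
          (fun a b _ _ h => σ.injective h) le_rfl
        obtain ⟨i, hi, hij⟩ := hsurj j (by simp [hj.1])
        simp only [Finset.mem_filter, Finset.mem_univ, true_and] at hi
        have : σ⁻¹ j = i := by rw [hij]; simp
        rw [this] at h
        omega
      · exact hj.2
    · simp

/-- the set of `s` whose *last* bad time is exactly `k` -/
noncomputable def Bk (n : ℕ) (k : ℕ) : Finset (Fin n → Bool) :=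
  Finset.univ.filter (fun s => k < 2 * cnt s k ∧ ∀ j, k < j → j ≤ n → 2 * cnt s j ≤ j)

lemma card_filter_lt (n k : ℕ) (hk : k ≤ n) :
    (Finset.univ.filter (fun i : Fin n => (i : ℕ) < k)).card = k := by
  rw [← Finset.card_range k]
  apply Finset.card_bij (fun (i : Fin n) _ => (i : ℕ))
  · intro i hi; simp only [Finset.mem_filter, Finset.mem_univ, true_and] at hi
    simpa using hi
  · intro a _ b _ h; exact Fin.val_injective h
  · intro j hj
    simp only [Finset.mem_range] at hj
    exact ⟨⟨j, lt_of_lt_of_le hj hk⟩, by simp [hj], rfl⟩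

lemma emi {n : ℕ} (hn : 0 < n) (p : (Fin n → Bool) → ℝ≥0∞)
    (hp : ∀ (σ : Equiv.Perm (Fin n)) s, p (s ∘ σ) = p s) :
    ∑ s ∈ Finset.univ.filter
        (fun s : Fin n → Bool => ¬ ∀ k, 1 ≤ k → k ≤ n → 2 * cnt s k ≤ k), p s
      ≤ 2 * ∑ s ∈ Finset.univ.filter (fun s : Fin n → Bool => s ⟨0, hn⟩ = true), p s := by
  classical
  set i0 : Fin n := ⟨0, hn⟩
  -- the bad set is covered by the disjoint union of the Bk's
  have hcover : Finset.univ.filter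
      (fun s : Fin n → Bool => ¬ ∀ k, 1 ≤ k → k ≤ n → 2 * cnt s k ≤ k)
      ⊆ (Finset.Icc 1 n).biUnion (fun k => Bk n k) := by
    intro s hs
    simp only [Finset.mem_filter, Finset.mem_univ, true_and] at hs
    push_neg at hs
    obtain ⟨k₀, hk₀1, hk₀n, hk₀⟩ := hs
    -- take the largest bad time
    have hne : ((Finset.Icc 1 n).filter (fun k => k < 2 * cnt s k)).Nonempty :=
      ⟨k₀, by simp [Finset.mem_Icc, hk₀1, hk₀n, hk₀]⟩
    set K := ((Finset.Icc 1 n).filter (fun k => k < 2 * cnt s k)).max' hne with hK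
    have hKmem := ((Finset.Icc 1 n).filter (fun k => k < 2 * cnt s k)).max'_mem hne
    simp only [Finset.mem_filter, Finset.mem_Icc] at hKmem
    refine Finset.mem_biUnion.2 ⟨K, by simp only [Finset.mem_Icc]; exact hKmem.1, ?_⟩
    simp only [Bk, Finset.mem_filter, Finset.mem_univ, true_and]
    refine ⟨hKmem.2, ?_⟩
    intro j hKj hjn
    by_contra h
    push_neg at h
    have : j ≤ K := Finset.le_max' _ j (by
      simp only [Finset.mem_filter, Finset.mem_Icc]
      exact ⟨⟨le_trans hKmem.1.1 (le_of_lt hKj), hjn⟩, h⟩)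
    omega
  -- the Bk's are pairwise disjoint
  have hdisj : ∀ k ∈ Finset.Icc 1 n, ∀ k' ∈ Finset.Icc 1 n, k ≠ k' →
      Disjoint (Bk n k) (Bk n k') := by
    intro k hk k' hk' hne
    simp only [Finset.mem_Icc] at hk hk'
    rw [Finset.disjoint_left]
    intro s hs hs'
    simp only [Bk, Finset.mem_filter, Finset.mem_univ, true_and] at hs hs'
    rcases lt_or_gt_of_ne hne with h | h
    · have := hs.2 k' h hk'.2; omega
    · have := hs'.2 k h hk.2; omega
  -- the key per-k inequality
  have hkey : ∀ k ∈ Finset.Icc 1 n,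
      ∑ s ∈ Bk n k, p s ≤ 2 * ∑ s ∈ (Bk n k).filter (fun s => s i0 = true), p s := by
    intro k hk
    simp only [Finset.mem_Icc] at hk
    -- swap invariance of Bk under swaps of indices < k
    have hBkinv : ∀ (i : Fin n), (i : ℕ) < k → ∀ s, s ∈ Bk n k → s ∘ Equiv.swap i0 i ∈ Bk n k := by
      intro i hi s hs
      have hcnteq : ∀ m, k ≤ m → cnt (s ∘ Equiv.swap i0 i) m = cnt s m := by
        intro m hm
        apply cnt_comp
        intro j hj
        rcases eq_or_ne j i0 with rfl | h0
        · rw [Equiv.swap_apply_left]; omega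
        rcases eq_or_ne j i with rfl | h1
        · rw [Equiv.swap_apply_right]
          have h0 : (i0 : ℕ) = 0 := rfl
          omega
        · rw [Equiv.swap_apply_of_ne_of_ne h0 h1]; exact hj
      simp only [Bk, Finset.mem_filter, Finset.mem_univ, true_and] at hs ⊢
      refine ⟨by rw [hcnteq k le_rfl]; exact hs.1, ?_⟩
      intro j hkj hjn
      rw [hcnteq j (le_of_lt hkj)]
      exact hs.2 j hkj hjn
    -- for i < k, the weighted sums agree
    have hswap : ∀ (i : Fin n), (i : ℕ) < k →
        ∑ s ∈ (Bk n k).filter (fun s => s i = true), p s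
          = ∑ s ∈ (Bk n k).filter (fun s => s i0 = true), p s := by
      intro i hi
      apply Finset.sum_nbij' (fun s => s ∘ Equiv.swap i0 i) (fun s => s ∘ Equiv.swap i0 i)
      · intro s hs
        simp only [Finset.mem_filter] at hs ⊢
        refine ⟨hBkinv i hi s hs.1, ?_⟩
        simp only [Function.comp_apply, Equiv.swap_apply_left]
        exact hs.2
      · intro s hs
        simp only [Finset.mem_filter] at hs ⊢
        refine ⟨hBkinv i hi s hs.1, ?_⟩
        simp only [Function.comp_apply, Equiv.swap_apply_right]
        exact hs.2
      · intro s _; funext j; simp [Function.comp]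
      · intro s _; funext j; simp [Function.comp]
      · intro s _; exact (hp (Equiv.swap i0 i) s).symm
    -- weighted sum identity
    have hweight : ∑ s ∈ Bk n k, (cnt s k : ℝ≥0∞) * p s
        = (k : ℝ≥0∞) * ∑ s ∈ (Bk n k).filter (fun s => s i0 = true), p s := by
      have : ∀ s, (cnt s k : ℝ≥0∞) * p s
          = ∑ i : Fin n, if (i : ℕ) < k ∧ s i = true then p s else 0 := by
        intro s
        rw [Finset.sum_ite, Finset.sum_const_zero, add_zero, Finset.sum_const, nsmul_eq_mul]
        rfl
      rw [Finset.sum_congr rfl (fun s _ => this s), Finset.sum_comm]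
      have : ∀ i : Fin n, ∑ s ∈ Bk n k, (if (i : ℕ) < k ∧ s i = true then p s else 0)
          = if (i : ℕ) < k then ∑ s ∈ (Bk n k).filter (fun s => s i0 = true), p s else 0 := by
        intro i
        by_cases hik : (i : ℕ) < k
        · simp only [hik, true_and, if_true]
          rw [← Finset.sum_filter]
          exact hswap i hik
        · simp [hik]
      rw [Finset.sum_congr rfl (fun i _ => this i)]
      rw [Finset.sum_ite, Finset.sum_const_zero, add_zero, Finset.sum_const, nsmul_eq_mul]
      congr 1
      exact_mod_cast card_filter_lt n k hk.2
    -- k * LHS ≤ sum of 2*cnt ≤ 2 * k * RHS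
    have hstep : (k : ℝ≥0∞) * ∑ s ∈ Bk n k, p s
        ≤ (k : ℝ≥0∞) * (2 * ∑ s ∈ (Bk n k).filter (fun s => s i0 = true), p s) := by
      calc (k : ℝ≥0∞) * ∑ s ∈ Bk n k, p s
          = ∑ s ∈ Bk n k, (k : ℝ≥0∞) * p s := by rw [Finset.mul_sum]
        _ ≤ ∑ s ∈ Bk n k, (2 * cnt s k : ℝ≥0∞) * p s := by
            apply Finset.sum_le_sum
            intro s hs
            simp only [Bk, Finset.mem_filter, Finset.mem_univ, true_and] at hs
            apply mul_le_mul_left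
            exact_mod_cast le_of_lt hs.1
        _ = 2 * ∑ s ∈ Bk n k, (cnt s k : ℝ≥0∞) * p s := by
            rw [Finset.mul_sum]
            apply Finset.sum_congr rfl
            intro s _
            push_cast
            ring
        _ = (k : ℝ≥0∞) * (2 * ∑ s ∈ (Bk n k).filter (fun s => s i0 = true), p s) := by
            rw [hweight]; ring
    have hk0 : (k : ℝ≥0∞) ≠ 0 := by
      simp only [ne_eq, Nat.cast_eq_zero]; omega
    exact (ENNReal.mul_le_mul_iff_right hk0 (ENNReal.natCast_ne_top k)).1 hstep
  calc ∑ s ∈ Finset.univ.filter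
        (fun s : Fin n → Bool => ¬ ∀ k, 1 ≤ k → k ≤ n → 2 * cnt s k ≤ k), p s
      ≤ ∑ s ∈ (Finset.Icc 1 n).biUnion (fun k => Bk n k), p s :=
        Finset.sum_le_sum_of_subset hcover
    _ = ∑ k ∈ Finset.Icc 1 n, ∑ s ∈ Bk n k, p s := Finset.sum_biUnion hdisj
    _ ≤ ∑ k ∈ Finset.Icc 1 n, 2 * ∑ s ∈ (Bk n k).filter (fun s => s i0 = true), p s :=
        Finset.sum_le_sum hkey
    _ = 2 * ∑ k ∈ Finset.Icc 1 n, ∑ s ∈ (Bk n k).filter (fun s => s i0 = true), p s := by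
        rw [Finset.mul_sum]
    _ = 2 * ∑ s ∈ (Finset.Icc 1 n).biUnion
          (fun k => (Bk n k).filter (fun s => s i0 = true)), p s := by
        rw [Finset.sum_biUnion]
        intro k hk k' hk' hne
        exact Finset.disjoint_filter_filter (hdisj k hk k' hk' hne)
    _ ≤ 2 * ∑ s ∈ Finset.univ.filter (fun s : Fin n → Bool => s i0 = true), p s := by
        apply mul_le_mul_right
        apply Finset.sum_le_sum_of_subset
        intro s hs
        simp only [Finset.mem_biUnion, Finset.mem_filter] at hs
        obtain ⟨k, _, _, h⟩ := hs
        simp [h]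


lemma msing {n : ℕ} (g : Fin n → ℝ) : MeasurableSet {g} := by
  have h : ({g} : Set (Fin n → ℝ)) = ⋂ i, (fun f : Fin n → ℝ => f i) ⁻¹' {g i} := by
    ext f; simp [funext_iff]
  rw [h]
  exact MeasurableSet.iInter fun i => (measurable_pi_apply i) (measurableSet_singleton _)

end RPC

open RPC

/-- Theorem 3 (first part): random permutation aggregation has coverage ≥ 1 - 2α.
`X ω k` is the indicator that the true label is missed by the `k`-th permuted set;
exchangeability of `X` encodes the assumption enabling the exchangeable Markov
inequality. -/
theorem random_permutation_coverage {Ω : Type*} [MeasurableSpace Ω] (μ : Measure Ω)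
    [IsProbabilityMeasure μ] {𝒴 : Type*} (n : ℕ) (hn : 0 < n)
    (C : Fin n → Ω → Set 𝒴) (π : Ω → Equiv.Perm (Fin n)) (cstar : 𝒴) (α : ℝ)
    (hmeas : ∀ i (c : 𝒴), MeasurableSet {ω | c ∈ C i ω})
    (hcov : ∀ i, ENNReal.ofReal (1 - α) ≤ μ {ω | cstar ∈ C i ω})
    (X : Ω → Fin n → ℝ)
    (hX : ∀ ω k, X ω k = if cstar ∈ C (π ω k) ω then 0 else 1)
    (hmeasX : Measurable X)
    (hexch : ∀ σ : Equiv.Perm (Fin n), μ.map (fun ω => X ω ∘ σ) = μ.map X) :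
    ENNReal.ofReal (1 - 2 * α) ≤
      μ {ω | ∀ k : ℕ, 1 ≤ k → k ≤ n →
        (1/2 : ℝ) ≤ (1 / k : ℝ) * ∑ i : Fin n,
          (if (i : ℕ) < k then (if cstar ∈ C (π ω i) ω then (1 : ℝ) else 0) else 0)} := by
  classical
  set i0 : Fin n := ⟨0, hn⟩ with hi0
  rcases le_or_gt (1 - 2 * α) 0 with hα2 | hα2
  · rw [ENNReal.ofReal_eq_zero.2 hα2]; exact zero_le
  have hα1 : α < 1/2 := by linarith
  have hα0 : 0 ≤ α := by
    have h1 : ENNReal.ofReal (1 - α) ≤ 1 := (hcov i0).trans prob_le_one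
    have := ENNReal.ofReal_le_one.1 h1
    linarith
  -- encode atoms
  set sh : (Fin n → Bool) → (Fin n → ℝ) := fun s i => if s i then 1 else 0 with hsh
  set E : (Fin n → Bool) → Set Ω := fun s => X ⁻¹' {sh s} with hE
  set p : (Fin n → Bool) → ℝ≥0∞ := fun s => μ (E s) with hpdef
  have hEmeas : ∀ s, MeasurableSet (E s) := fun s => hmeasX (msing (sh s))
  have hsh_inj : Function.Injective sh := by
    intro s t h
    funext i
    have := congrFun h i
    simp only [hsh] at this
    cases hs : s i <;> cases ht : t i <;> simp [hs, ht] at this ⊢ <;> norm_num at this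
  set sOf : Ω → (Fin n → Bool) := fun ω i => if cstar ∈ C (π ω i) ω then false else true
    with hsOf
  have hmemE : ∀ ω, X ω = sh (sOf ω) := by
    intro ω
    funext i
    rw [hX ω i]
    by_cases hc : cstar ∈ C (π ω i) ω <;> simp [hsh, hsOf, hc]
  have hatom : ∀ ω s, X ω = sh s → sOf ω = s := by
    intro ω s h
    exact hsh_inj ((hmemE ω).symm.trans h)
  -- exchangeability of atoms
  have hp : ∀ (σ : Equiv.Perm (Fin n)) s, p (s ∘ σ) = p s := by
    intro σ s
    have hm2 : Measurable (fun ω => X ω ∘ σ) :=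
      measurable_pi_lambda _ fun i => (measurable_pi_apply (σ i)).comp hmeasX
    have hset : MeasurableSet ({sh s ∘ σ} : Set (Fin n → ℝ)) := msing _
    have h1 : μ.map (fun ω => X ω ∘ σ) {sh s ∘ σ} = μ.map X {sh s ∘ σ} := by
      rw [hexch σ]
    rw [Measure.map_apply hm2 hset, Measure.map_apply hmeasX hset] at h1
    have h2 : (fun ω => X ω ∘ σ) ⁻¹' {sh s ∘ σ} = E s := by
      ext ω
      simp only [Set.mem_preimage, Set.mem_singleton_iff, hE]
      constructor
      · intro h
        funext i
        have := congrFun h (σ.symm i)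
        simpa using this
      · intro h; rw [h]
    have h3 : X ⁻¹' {sh s ∘ σ} = E (s ∘ σ) := rfl
    rw [h2, h3] at h1
    exact h1.symm
  -- atoms are pairwise disjoint
  have hdisj : Set.PairwiseDisjoint (↑(Finset.univ : Finset (Fin n → Bool)) : Set (Fin n → Bool)) E := by
    intro s _ t _ hst
    simp only [Function.onFun]
    rw [Set.disjoint_left]
    intro ω hs ht
    simp only [hE, Set.mem_preimage, Set.mem_singleton_iff] at hs ht
    exact hst (hsh_inj (hs.symm.trans ht))
  -- pointwise characterization of the good event
  have hpoint : ∀ ω (k : ℕ), 1 ≤ k → k ≤ n →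
      (((1:ℝ)/2 ≤ (1 / k : ℝ) * ∑ i : Fin n,
          (if (i : ℕ) < k then (if cstar ∈ C (π ω i) ω then (1 : ℝ) else 0) else 0))
        ↔ 2 * cnt (sOf ω) k ≤ k) := by
    intro ω k hk1 hkn
    have hterm : ∀ i : Fin n, (if cstar ∈ C (π ω i) ω then (1:ℝ) else 0)
        = if sOf ω i = true then 0 else 1 := by
      intro i
      by_cases hc : cstar ∈ C (π ω i) ω <;> simp [hsOf, hc]
    have hsum : (∑ i : Fin n,
          (if (i : ℕ) < k then (if cstar ∈ C (π ω i) ω then (1 : ℝ) else 0) else 0))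
        = ((Finset.univ.filter
            (fun i : Fin n => (i : ℕ) < k ∧ ¬ sOf ω i = true)).card : ℝ) := by
      rw [← Finset.sum_boole]
      apply Finset.sum_congr rfl
      intro i _
      rw [hterm i]
      by_cases h1 : (i : ℕ) < k <;> by_cases h2 : sOf ω i = true <;> simp [h1, h2]
    have hsplit : cnt (sOf ω) k
        + (Finset.univ.filter (fun i : Fin n => (i : ℕ) < k ∧ ¬ sOf ω i = true)).card = k := by
      have h := Finset.card_filter_add_card_filter_not
        (s := Finset.univ.filter (fun i : Fin n => (i : ℕ) < k))
        (p := fun i => sOf ω i = true)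
      rw [Finset.filter_filter, Finset.filter_filter, card_filter_lt n k hkn] at h
      exact h
    rw [hsum]
    set c := (Finset.univ.filter (fun i : Fin n => (i : ℕ) < k ∧ ¬ sOf ω i = true)).card
    have hkpos : (0:ℝ) < (k : ℕ) := by
      have : 0 < k := hk1
      exact_mod_cast this
    rw [show (1 / (k:ℝ)) * (c : ℝ) = (c : ℝ) / k by ring, le_div_iff₀ hkpos]
    constructor
    · intro h
      have h' : (k : ℕ) ≤ 2 * c := by exact_mod_cast (by linarith : (k:ℝ) ≤ 2 * c)
      omega
    · intro h
      have h' : (k:ℝ) ≤ 2 * c := by exact_mod_cast (by omega : k ≤ 2 * c)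
      linarith
  -- the good event as a union of atoms
  set good : (Fin n → Bool) → Prop := fun s => ∀ k, 1 ≤ k → k ≤ n → 2 * cnt s k ≤ k
    with hgood
  have hGset : {ω | ∀ k : ℕ, 1 ≤ k → k ≤ n →
        (1/2 : ℝ) ≤ (1 / k : ℝ) * ∑ i : Fin n,
          (if (i : ℕ) < k then (if cstar ∈ C (π ω i) ω then (1 : ℝ) else 0) else 0)}
      = ⋃ s ∈ Finset.univ.filter good, E s := by
    ext ω
    simp only [Set.mem_setOf_eq, Set.mem_iUnion, Finset.mem_filter, Finset.mem_univ,
      true_and, exists_prop]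
    constructor
    · intro hω
      refine ⟨sOf ω, ?_, ?_⟩
      · intro k hk1 hkn
        exact (hpoint ω k hk1 hkn).1 (hω k hk1 hkn)
      · show ω ∈ E (sOf ω)
        simp only [hE, Set.mem_preimage, Set.mem_singleton_iff]
        exact hmemE ω
    · rintro ⟨s, hs, hωE⟩
      have hXs : X ω = sh s := hωE
      have hss : sOf ω = s := hatom ω s hXs
      intro k hk1 hkn
      refine (hpoint ω k hk1 hkn).2 ?_
      rw [hss]
      exact hs k hk1 hkn
  have hmuG : μ {ω | ∀ k : ℕ, 1 ≤ k → k ≤ n →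
        (1/2 : ℝ) ≤ (1 / k : ℝ) * ∑ i : Fin n,
          (if (i : ℕ) < k then (if cstar ∈ C (π ω i) ω then (1 : ℝ) else 0) else 0)}
      = ∑ s ∈ Finset.univ.filter good, p s := by
    rw [hGset]
    exact measure_biUnion_finset (hdisj.subset (by intro s _; simp))
      (fun s _ => hEmeas s)
  -- total mass one
  have htotal : ∑ s ∈ (Finset.univ : Finset (Fin n → Bool)), p s = 1 := by
    have huniv : (Set.univ : Set Ω) = ⋃ s ∈ (Finset.univ : Finset (Fin n → Bool)), E s := by
      ext ω
      simp only [Set.mem_univ, true_iff, Set.mem_iUnion, Finset.mem_univ, exists_prop,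
        exists_true_left]
      exact ⟨sOf ω, by trivial, by
        simp only [hE, Set.mem_preimage, Set.mem_singleton_iff]; exact hmemE ω⟩
    rw [← measure_biUnion_finset hdisj (fun s _ => hEmeas s), ← huniv, measure_univ]
  -- the per-coordinate miss probability is at most α
  set F : Fin n → Set Ω := fun j => (fun ω => X ω j) ⁻¹' {1} with hF
  have hFmeas : ∀ j, MeasurableSet (F j) :=
    fun j => ((measurable_pi_apply j).comp hmeasX) (measurableSet_singleton 1)
  have hFswap : ∀ j, μ (F j) = μ (F i0) := by
    intro j
    set σ := Equiv.swap i0 j with hσ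
    have hm2 : Measurable (fun ω => X ω ∘ σ) :=
      measurable_pi_lambda _ fun i => (measurable_pi_apply (σ i)).comp hmeasX
    have hT : MeasurableSet {f : Fin n → ℝ | f i0 = 1} :=
      (measurable_pi_apply i0) (measurableSet_singleton 1)
    have h1 : μ.map (fun ω => X ω ∘ σ) {f : Fin n → ℝ | f i0 = 1}
        = μ.map X {f : Fin n → ℝ | f i0 = 1} := by rw [hexch σ]
    rw [Measure.map_apply hm2 hT, Measure.map_apply hmeasX hT] at h1
    have e1 : (fun ω => X ω ∘ σ) ⁻¹' {f : Fin n → ℝ | f i0 = 1} = F j := by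
      ext ω
      simp [hF, hσ, Equiv.swap_apply_left]
    have e2 : X ⁻¹' {f : Fin n → ℝ | f i0 = 1} = F i0 := by
      ext ω; simp [hF]
    rw [e1, e2] at h1
    exact h1
  have hsumF : ∑ j : Fin n, μ (F j) = ∑ i : Fin n, μ {ω | cstar ∈ C i ω}ᶜ := by
    have hAmeas : ∀ i : Fin n, MeasurableSet ({ω | cstar ∈ C i ω}ᶜ) :=
      fun i => (hmeas i cstar).compl
    calc ∑ j : Fin n, μ (F j)
        = ∑ j : Fin n, ∫⁻ ω, Set.indicator (F j) (fun _ => (1:ℝ≥0∞)) ω ∂μ := by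
          refine Finset.sum_congr rfl fun j _ => ?_
          rw [lintegral_indicator_const (hFmeas j), one_mul]
      _ = ∫⁻ ω, ∑ j : Fin n, Set.indicator (F j) (fun _ => (1:ℝ≥0∞)) ω ∂μ :=
          (lintegral_finset_sum _ fun j _ => (measurable_const.indicator (hFmeas j))).symm
      _ = ∫⁻ ω, ∑ i : Fin n,
            Set.indicator ({ω | cstar ∈ C i ω}ᶜ) (fun _ => (1:ℝ≥0∞)) ω ∂μ := by
          refine lintegral_congr fun ω => ?_
          have hpt : ∀ j : Fin n, Set.indicator (F j) (fun _ => (1:ℝ≥0∞)) ω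
              = (fun i : Fin n =>
                  Set.indicator ({ω' | cstar ∈ C i ω'}ᶜ) (fun _ => (1:ℝ≥0∞)) ω) (π ω j) := by
            intro j
            simp only [Set.indicator_apply, hF, Set.mem_preimage, Set.mem_singleton_iff,
              hX ω j, Set.mem_compl_iff, Set.mem_setOf_eq]
            by_cases hc : cstar ∈ C (π ω j) ω <;> simp [hc]
          rw [Finset.sum_congr rfl (fun j _ => hpt j)]
          exact Equiv.sum_comp (π ω) (fun i : Fin n =>
            Set.indicator ({ω' | cstar ∈ C i ω'}ᶜ) (fun _ => (1:ℝ≥0∞)) ω)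
      _ = ∑ i : Fin n, ∫⁻ ω,
            Set.indicator ({ω | cstar ∈ C i ω}ᶜ) (fun _ => (1:ℝ≥0∞)) ω ∂μ :=
          lintegral_finset_sum _ fun i _ => (measurable_const.indicator (hAmeas i))
      _ = ∑ i : Fin n, μ {ω | cstar ∈ C i ω}ᶜ := by
          refine Finset.sum_congr rfl fun i _ => ?_
          rw [lintegral_indicator_const (hAmeas i), one_mul]
  have hAle : ∀ i : Fin n, μ {ω | cstar ∈ C i ω}ᶜ ≤ ENNReal.ofReal α := by
    intro i
    rw [measure_compl (hmeas i cstar) (measure_ne_top μ _), measure_univ]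
    calc (1 : ℝ≥0∞) - μ {ω | cstar ∈ C i ω}
        ≤ 1 - ENNReal.ofReal (1 - α) := tsub_le_tsub_left (hcov i) 1
      _ = ENNReal.ofReal α := by
          rw [← ENNReal.ofReal_one, ← ENNReal.ofReal_sub _ (by linarith : (0:ℝ) ≤ 1 - α)]
          norm_num
  have hq : μ (F i0) ≤ ENNReal.ofReal α := by
    have h1 : ∑ j : Fin n, μ (F j) = (n : ℝ≥0∞) * μ (F i0) := by
      rw [Finset.sum_congr rfl fun j _ => hFswap j, Finset.sum_const, Finset.card_univ,
        Fintype.card_fin, nsmul_eq_mul]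
    have h2 : ∑ i : Fin n, μ {ω | cstar ∈ C i ω}ᶜ ≤ (n : ℝ≥0∞) * ENNReal.ofReal α := by
      calc ∑ i : Fin n, μ {ω | cstar ∈ C i ω}ᶜ
          ≤ ∑ _i : Fin n, ENNReal.ofReal α := Finset.sum_le_sum fun i _ => hAle i
        _ = (n : ℝ≥0∞) * ENNReal.ofReal α := by
            rw [Finset.sum_const, Finset.card_univ, Fintype.card_fin, nsmul_eq_mul]
    have h3 : (n : ℝ≥0∞) * μ (F i0) ≤ (n : ℝ≥0∞) * ENNReal.ofReal α := by
      rw [← h1, hsumF]; exact h2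
    have hn' : (n : ℝ≥0∞) ≠ 0 := by
      simp only [ne_eq, Nat.cast_eq_zero]; omega
    exact (ENNReal.mul_le_mul_iff_right hn' (ENNReal.natCast_ne_top n)).1 h3
  -- μ (F i0) as a sum of atoms
  have hFq : μ (F i0) = ∑ s ∈ Finset.univ.filter (fun s : Fin n → Bool => s i0 = true), p s := by
    have hset : F i0 = ⋃ s ∈ Finset.univ.filter (fun s : Fin n → Bool => s i0 = true), E s := by
      ext ω
      simp only [hF, Set.mem_preimage, Set.mem_singleton_iff, Set.mem_iUnion,
        Finset.mem_filter, Finset.mem_univ, true_and, exists_prop]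
      constructor
      · intro h
        refine ⟨sOf ω, ?_, ?_⟩
        · have h2 := congrFun (hmemE ω) i0
          rw [h] at h2
          by_contra hb
          simp only [Bool.not_eq_true] at hb
          simp [hsh, hb] at h2
        · show ω ∈ E (sOf ω)
          simp only [hE, Set.mem_preimage, Set.mem_singleton_iff]
          exact hmemE ω
      · rintro ⟨s, hs, hωE⟩
        have hXs : X ω = sh s := hωE
        rw [congrFun hXs i0]
        simp [hsh, hs]
    rw [hset]
    exact measure_biUnion_finset (hdisj.subset (by intro s _; simp)) (fun s _ => hEmeas s)
  -- apply the exchangeable Markov inequality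
  have hbad : ∑ s ∈ Finset.univ.filter (fun s : Fin n → Bool => ¬ good s), p s
      ≤ ENNReal.ofReal (2 * α) := by
    calc ∑ s ∈ Finset.univ.filter (fun s : Fin n → Bool => ¬ good s), p s
        ≤ 2 * ∑ s ∈ Finset.univ.filter (fun s : Fin n → Bool => s ⟨0, hn⟩ = true), p s := by
          have h := emi hn p hp
          convert h using 2
          congr! 1
      _ = 2 * μ (F i0) := by rw [← hFq]
      _ ≤ 2 * ENNReal.ofReal α := by exact mul_le_mul_right hq 2
      _ = ENNReal.ofReal (2 * α) := by
          rw [ENNReal.ofReal_mul (by norm_num : (0:ℝ) ≤ 2)]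
          norm_num
  -- conclude
  rw [hmuG]
  have hsplit2 : (∑ s ∈ Finset.univ.filter good, p s)
      + ∑ s ∈ Finset.univ.filter (fun s => ¬ good s), p s = 1 := by
    rw [Finset.sum_filter_add_sum_filter_not]
    exact htotal
  have hfinal : ENNReal.ofReal (1 - 2 * α) + ENNReal.ofReal (2 * α)
      ≤ (∑ s ∈ Finset.univ.filter good, p s) + ENNReal.ofReal (2 * α) := by
    rw [← ENNReal.ofReal_add (by linarith) (by linarith)]
    have : (1 : ℝ) - 2 * α + 2 * α = 1 := by ring
    rw [this, ENNReal.ofReal_one]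
    calc (1 : ℝ≥0∞) = (∑ s ∈ Finset.univ.filter good, p s)
          + ∑ s ∈ Finset.univ.filter (fun s => ¬ good s), p s := hsplit2.symm
      _ ≤ (∑ s ∈ Finset.univ.filter good, p s) + ENNReal.ofReal (2 * α) :=
          add_le_add_right hbad _
  exact (ENNReal.add_le_add_iff_right ENNReal.ofReal_ne_top).1 hfinal
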